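/- Let s_n = (n+1)·(n+1)^(1/(n+1)) − n·n^(1/n) for integers n ≥ 1, and let a_s(x) = x^(1/x)·(x + 1 − ln x) − x for x > 0. Then 1 + a_s(n+1)/(n+1) < s_n < 1 + a_s(n)/n for all n ≥ 1, and a_s(n) tends to 1 as n → ∞. -/

import Mathlib

open Real Filter

noncomputable def s (n : ℕ) : ℝ :=
  ((n : ℝ) + 1) * ((n : ℝ) + 1) ^ (1 / ((n : ℝ) + 1)) - (n : ℝ) * (n : ℝ) ^ (1 / (n : ℝ))

noncomputable def a_s (x : ℝ) : ℝ := x ^ (1 / x) * (x + 1 - Real.log x) - x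

/-- auxiliary: `T(x) = x * exp(log x / x)`, equal to `x * x^(1/x)` for `x > 0`. -/
noncomputable def Tfun (x : ℝ) : ℝ := x * Real.exp (Real.log x / x)

/-- auxiliary: the derivative of `Tfun`. -/
noncomputable def Dfun (x : ℝ) : ℝ := Real.exp (Real.log x / x) * (x + 1 - Real.log x) / x

lemma hasDerivAt_g {x : ℝ} (hx : 0 < x) :
    HasDerivAt (fun y => Real.log y / y) ((1 - Real.log x) / x ^ 2) x := by
  have h : HasDerivAt (fun y => Real.log y / y) _ x := (Real.hasDerivAt_log hx.ne').div (hasDerivAt_id x) hx.ne'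
  convert h using 1
  field_simp

lemma hasDerivAt_T {x : ℝ} (hx : 0 < x) : HasDerivAt Tfun (Dfun x) x := by
  have hg := (hasDerivAt_g hx).exp
  have h : HasDerivAt Tfun _ x := (hasDerivAt_id x).mul hg
  convert h using 1
  unfold Dfun
  simp only [id]
  field_simp
  ring

lemma hasDerivAt_D {x : ℝ} (hx : 0 < x) :
    HasDerivAt Dfun (Real.exp (Real.log x / x) * ((1 - Real.log x) ^ 2 - x) / x ^ 3) x := by
  have hg := (hasDerivAt_g hx).exp
  have hk : HasDerivAt (fun y => (y + 1 - Real.log y) / y) ((Real.log x - 2) / x ^ 2) x := by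
    have h : HasDerivAt (fun y => (y + 1 - Real.log y) / y) _ x := (((hasDerivAt_id x).add_const 1).sub (Real.hasDerivAt_log hx.ne')).div
      (hasDerivAt_id x) hx.ne'
    convert h using 1
    simp only [id, Pi.sub_apply]
    field_simp
    ring
  have h : HasDerivAt (fun y => Real.exp (Real.log y / y) * ((y + 1 - Real.log y) / y)) _ x := hg.mul hk
  have hD : Dfun = fun y => Real.exp (Real.log y / y) * ((y + 1 - Real.log y) / y) := by
    funext y; unfold Dfun; ring
  rw [hD]
  convert h using 1
  field_simp
  ring

lemma sq_log_lt {x : ℝ} (hx : 1 < x) : (1 - Real.log x) ^ 2 < x := by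
  have hlog : 0 < Real.log x := Real.log_pos hx
  rcases le_or_gt (Real.log x) 1 with h | h
  · nlinarith
  · -- log x ≤ 2 * sqrt x / e < sqrt x + 1
    have hx0 : (0 : ℝ) < x := by linarith
    have hs : Real.sqrt x ^ 2 = x := Real.sq_sqrt hx0.le
    have hs1 : 1 < Real.sqrt x := by
      nlinarith [Real.sqrt_nonneg x]
    have hls : Real.log (Real.sqrt x) ≤ Real.sqrt x / Real.exp 1 := by
      have h1 : Real.log (Real.sqrt x / Real.exp 1) ≤ Real.sqrt x / Real.exp 1 - 1 :=
        Real.log_le_sub_one_of_pos (by positivity)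
      have h2 : Real.log (Real.sqrt x / Real.exp 1) =
          Real.log (Real.sqrt x) - 1 := by
        rw [Real.log_div (by positivity) (Real.exp_ne_zero 1), Real.log_exp]
      linarith
    have hlx : Real.log x = 2 * Real.log (Real.sqrt x) := by
      rw [← hs, Real.log_pow]
      norm_num
    have he : (2 : ℝ) < Real.exp 1 := by
      have := Real.exp_one_gt_d9
      linarith
    have hlt : Real.log x < Real.sqrt x + 1 := by
      have : Real.log x ≤ 2 * (Real.sqrt x / Real.exp 1) := by
        rw [hlx]; linarith
      have h2 : 2 * (Real.sqrt x / Real.exp 1) < Real.sqrt x := by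
        rw [mul_div_assoc', div_lt_iff₀ (Real.exp_pos 1)]
        nlinarith
      linarith
    have h0 : 0 < Real.log x - 1 := by linarith
    nlinarith

lemma D_strictAnti : StrictAntiOn Dfun (Set.Ici 1) := by
  apply strictAntiOn_of_deriv_neg (convex_Ici 1)
  · intro x hx
    exact (hasDerivAt_D (lt_of_lt_of_le one_pos hx)).continuousAt.continuousWithinAt
  · intro x hx
    rw [interior_Ici] at hx
    have hx0 : (0 : ℝ) < x := lt_trans one_pos hx
    rw [(hasDerivAt_D hx0).deriv]
    have h1 := sq_log_lt hx
    have h2 : (0 : ℝ) < Real.exp (Real.log x / x) := Real.exp_pos _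
    have h3 : (0 : ℝ) < x ^ 3 := by positivity
    apply div_neg_of_neg_of_pos _ h3
    nlinarith

lemma a_s_eq {x : ℝ} (hx : 0 < x) :
    a_s x = Real.exp (Real.log x / x) * (x + 1 - Real.log x) - x := by
  unfold a_s
  rw [Real.rpow_def_of_pos hx, mul_one_div]

lemma one_add_a_s_div {x : ℝ} (hx : 0 < x) : 1 + a_s x / x = Dfun x := by
  rw [a_s_eq hx]
  unfold Dfun
  field_simp
  ring

/-- Theorem 1 (c), (d): `1 + a_s(n+1)/(n+1) < s_n < 1 + a_s(n)/n` for all `n ≥ 1`,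
and `a_s(n) → 1` as `n → ∞`. -/
theorem s_estimates_and_a_s_tendsto :
    (∀ n : ℕ, 1 ≤ n →
      1 + a_s ((n : ℝ) + 1) / ((n : ℝ) + 1) < s n ∧ s n < 1 + a_s (n : ℝ) / (n : ℝ)) ∧
    Tendsto (fun n : ℕ => a_s (n : ℝ)) atTop (nhds 1) := by
  constructor
  · intro n hn
    have hn1 : (1 : ℝ) ≤ (n : ℝ) := by exact_mod_cast hn
    have hn0 : (0 : ℝ) < (n : ℝ) := by linarith
    have hlt : (n : ℝ) < (n : ℝ) + 1 := by linarith
    obtain ⟨c, hc, hceq⟩ := exists_hasDerivAt_eq_slope Tfun Dfun hlt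
      (fun x hx => (hasDerivAt_T (lt_of_lt_of_le hn0 hx.1)).continuousAt.continuousWithinAt)
      (fun x hx => hasDerivAt_T (lt_trans hn0 hx.1))
    have hsn : s n = Dfun c := by
      rw [hceq]
      unfold s Tfun
      rw [Real.rpow_def_of_pos hn0, Real.rpow_def_of_pos (by positivity), mul_one_div,
        mul_one_div]
      ring_nf
    have hc1 : (1 : ℝ) ≤ c := le_of_lt (lt_of_le_of_lt hn1 hc.1)
    constructor
    · rw [one_add_a_s_div (by linarith), hsn]
      exact D_strictAnti hc1 (by simp only [Set.mem_Ici]; linarith) hc.2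
    · rw [one_add_a_s_div hn0, hsn]
      exact D_strictAnti (by simpa using hn1) hc1 hc.1
  · -- squeeze: 1 + u - u*t ≤ a_s n ≤ 1/(1-u), u = log n / n, t = log n
    have hL : Tendsto (fun n : ℕ =>
        1 + Real.log n / n - Real.log n / n * Real.log n) atTop (nhds 1) := by
      have h1 : Tendsto (fun x : ℝ => Real.log x ^ 1 / (1 * x + 0)) atTop (nhds 0) :=
        Real.tendsto_pow_log_div_mul_add_atTop 1 0 1 one_ne_zero
      have h2 : Tendsto (fun x : ℝ => Real.log x ^ 2 / (1 * x + 0)) atTop (nhds 0) :=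
        Real.tendsto_pow_log_div_mul_add_atTop 1 0 2 one_ne_zero
      have h1' : Tendsto (fun n : ℕ => Real.log n / n) atTop (nhds 0) := by
        have := h1.comp tendsto_natCast_atTop_atTop (α := ℕ)
        simpa [Function.comp_def] using this
      have h2' : Tendsto (fun n : ℕ => Real.log n / n * Real.log n) atTop (nhds 0) := by
        have h2'' := h2.comp tendsto_natCast_atTop_atTop (α := ℕ)
        refine h2''.congr fun n => ?_
        simp only [Function.comp_apply, one_mul, add_zero]
        ring
      have := (tendsto_const_nhds (x := (1:ℝ)) (f := atTop)).add h1' |>.sub h2'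
      simpa using this
    have hU : Tendsto (fun n : ℕ => 1 / (1 - Real.log n / n)) atTop (nhds 1) := by
      have h1 : Tendsto (fun x : ℝ => Real.log x ^ 1 / (1 * x + 0)) atTop (nhds 0) :=
        Real.tendsto_pow_log_div_mul_add_atTop 1 0 1 one_ne_zero
      have h1' : Tendsto (fun n : ℕ => Real.log n / n) atTop (nhds 0) := by
        have := h1.comp tendsto_natCast_atTop_atTop (α := ℕ)
        simpa [Function.comp_def] using this
      have h' : Tendsto (fun n : ℕ => 1 - Real.log n / n) atTop (nhds 1) := by
        have := (tendsto_const_nhds (x := (1:ℝ)) (f := atTop)).sub h1'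
        simpa using this
      have hfin := Tendsto.div
        (tendsto_const_nhds : Tendsto (fun _ : ℕ => (1:ℝ)) atTop (nhds 1)) h' one_ne_zero
      rw [Pi.div_def] at hfin
      simpa using hfin
    refine tendsto_of_tendsto_of_tendsto_of_le_of_le' hL hU ?_ ?_
    · filter_upwards [eventually_ge_atTop 1] with n hn
      have hn1 : (1 : ℝ) ≤ (n : ℝ) := by exact_mod_cast hn
      have hn0 : (0 : ℝ) < (n : ℝ) := by linarith
      set t := Real.log (n : ℝ) with ht
      set u := t / (n : ℝ) with hu
      have hun : u * (n : ℝ) = t := by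
        rw [hu, div_mul_cancel₀ _ hn0.ne']
      have htn : t ≤ (n : ℝ) - 1 := Real.log_le_sub_one_of_pos hn0
      have hnt : (0 : ℝ) ≤ (n : ℝ) + 1 - t := by linarith
      rw [a_s_eq hn0, ← ht, ← hu]
      have hexp := Real.add_one_le_exp u
      nlinarith [mul_le_mul_of_nonneg_right hexp hnt]
    · filter_upwards [eventually_ge_atTop 1] with n hn
      have hn1 : (1 : ℝ) ≤ (n : ℝ) := by exact_mod_cast hn
      have hn0 : (0 : ℝ) < (n : ℝ) := by linarith
      set t := Real.log (n : ℝ) with ht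
      set u := t / (n : ℝ) with hu
      have hun : u * (n : ℝ) = t := by
        rw [hu, div_mul_cancel₀ _ hn0.ne']
      have htn : t ≤ (n : ℝ) - 1 := Real.log_le_sub_one_of_pos hn0
      have hnt : (0 : ℝ) ≤ (n : ℝ) + 1 - t := by linarith
      have hu1 : u < 1 := by
        rw [hu, div_lt_one hn0]
        exact lt_of_le_of_lt htn (by linarith)
      have h1mu : (0 : ℝ) < 1 - u := by linarith
      have hE : Real.exp u * (1 - u) ≤ 1 := by
        have h := Real.add_one_le_exp (-u)
        rw [Real.exp_neg] at h
        calc Real.exp u * (1 - u) ≤ Real.exp u * (Real.exp u)⁻¹ :=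
              mul_le_mul_of_nonneg_left (by linarith) (Real.exp_pos u).le
          _ = 1 := mul_inv_cancel₀ (Real.exp_ne_zero u)
      rw [a_s_eq hn0, ← ht, ← hu, le_div_iff₀ h1mu]
      nlinarith [mul_le_mul_of_nonneg_right hE hnt]
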